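/- Under the stated assumptions, M_c(L^∨,U_□) ≤ 2a: there is a measurable control u : [−a_δ,a_δ] → U_□ whose integral curve from x₀ stays in the closure of Ω and ends at x₁ at time a_δ and whose cost ∫_{−a_δ}^{a_δ} L^∨(γ(t),u(t)) dt equals 2a (namely, follow η with control (1,0) on [−λa,λa] and stand still with control (0,0) otherwise); hence the infimum M_c(L^∨,U_□) is at most 2a. -/

import Mathlib

open MeasureTheory Set Real ENNReal

noncomputable section

namespace SRGap

/-- The state space `ℝ^d`. -/
abbrev E (d : ℕ) := EuclideanSpace ℝ (Fin d)

/-- Build a vector of `ℝ^d` from its coordinates. -/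
def mk (d : ℕ) (v : Fin d → ℝ) : E d := (EuclideanSpace.equiv (Fin d) ℝ).symm v

/-- `k`-th coordinate (0-indexed), with junk value `0` out of range. -/
def coord {d : ℕ} (x : E d) (k : ℕ) : ℝ := if h : k < d then x ⟨k, h⟩ else 0

/-- The vector field `f₁(x) = (1,0,…,0)`. -/
def f₁ (d : ℕ) : E d → E d := fun _ => mk d fun i => if i.val = 0 then 1 else 0

/-- The vector field `f₂(x) = (0,1,x₁,x₁²/2!,…,x₁^{d-2}/(d-2)!)`. -/
def f₂ (d : ℕ) : E d → E d := fun x =>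
  mk d fun i => if i.val = 0 then 0 else coord x 0 ^ (i.val - 1) / (Nat.factorial (i.val - 1) : ℝ)

/-- The controlled vector field `f(x,u) = u₁ f₁(x) + u₂ f₂(x)`. -/
def fvf (d : ℕ) : E d → ℝ × ℝ → E d := fun x u => u.1 • f₁ d x + u.2 • f₂ d x

/-- The straight curve `η(t) = (t,0,…,0)`. -/
def ηc (d : ℕ) (t : ℝ) : E d := mk d fun i => if i.val = 0 then t else 0

/-- The matrix `A_t` whose columns are `f₁(η(t)),…,f_d(η(t))`. -/
def Amat (d : ℕ) (t : ℝ) : Fin d → Fin d → ℝ := fun i j =>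
  if j.val = 0 then (if i.val = 0 then 1 else 0)
  else if i.val < j.val then 0
  else t ^ (i.val - j.val) / (Nat.factorial (i.val - j.val) : ℝ)

/-- The map `φ(x) = A_{x₁} x`. -/
def φmap (d : ℕ) (x : E d) : E d := mk d fun i => ∑ j, Amat d (coord x 0) i j * x j

/-- The map `φ⁻¹(x) = A_{-x₁} x`. -/
def φinv (d : ℕ) (x : E d) : E d := mk d fun i => ∑ j, Amat d (-(coord x 0)) i j * x j

/-- `r(x) = ‖π(φ⁻¹(x))‖`, where `π` projects onto coordinates `x₃,…,x_d` (1-indexed). -/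
def rfun (d : ℕ) (x : E d) : ℝ :=
  Real.sqrt (∑ i : Fin d, if 2 ≤ i.val then (φinv d x) i ^ 2 else 0)

/-- `χ(s)`: indicator of `[-a,a]`. -/
def χ (a s : ℝ) : ℝ := if s ∈ Icc (-a) a then 1 else 0

/-- `‖u‖_∞ = max(|u₁|,|u₂|)` on `ℝ²`. -/
def supNorm (u : ℝ × ℝ) : ℝ := max |u.1| |u.2|

/-- Euclidean distance on `ℝ²`. -/
def edist2 (u v : ℝ × ℝ) : ℝ := Real.sqrt ((u.1 - v.1) ^ 2 + (u.2 - v.2) ^ 2)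

/-- `Δ(u)`: Euclidean distance from `u` to the four corners `(±1,±1)`. -/
def Δcorners (u : ℝ × ℝ) : ℝ :=
  min (min (edist2 u (1, 1)) (edist2 u (1, -1))) (min (edist2 u (-1, 1)) (edist2 u (-1, -1)))

/-- `L^∨(x,u) = χ(x₁)(‖u‖_∞ + r(x)²)`. -/
def Lvee (d : ℕ) (a : ℝ) (x : E d) (u : ℝ × ℝ) : ℝ := χ a (coord x 0) * (supNorm u + rfun d x ^ 2)

/-- `L^∨∨(x,u) = χ(x₁)(1 + 2Δ(u) + r(x)²)`. -/
def Lveevee (d : ℕ) (a : ℝ) (x : E d) (u : ℝ × ℝ) : ℝ :=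
  χ a (coord x 0) * (1 + 2 * Δcorners u + rfun d x ^ 2)

/-- `L⁻(x,u) = χ(x₁)(1 + r(x)²)`. -/
def Lminus (d : ℕ) (a : ℝ) (x : E d) (_u : ℝ × ℝ) : ℝ := χ a (coord x 0) * (1 + rfun d x ^ 2)

/-- The square of controls `U_□ = [-1,1]×[-1,1]`. -/
def Usq : Set (ℝ × ℝ) := Icc (-1 : ℝ) 1 ×ˢ Icc (-1 : ℝ) 1

/-- The four corners `U_:: = {(±1,±1)}`. -/
def Ucorners : Set (ℝ × ℝ) := {(1, 1), (1, -1), (-1, 1), (-1, -1)}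

/-- `(0, ξ_b(t)) ∈ ℝ^d`: first coordinate `0`, remaining coordinates `ξ_b(t) ∈ ℝ^{d-1}`. -/
def ξfull (d : ℕ) (p : ℝ → ℝ) (a b t : ℝ) : E d := mk d fun i =>
  if i.val = d - 2 then p t * (Real.cos (b * t) / b) + (1 - p t) * (Real.cos (a * b) / b)
  else if i.val = d - 1 then p t * (Real.sin (b * t) / b) + (1 - p t) * (Real.sin (a * b) / b)
  else 0

/-- The spiraling tube `𝕊`. -/
def Sspiral (d : ℕ) (a b : ℝ) : Set (E d) :=
  {z | ∃ x : E d, z = φmap d x ∧ coord x 0 ∈ Icc (-a) a ∧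
    (∑ i : Fin d,
      if i.val = d - 2 then (x i - Real.cos (b * coord x 0) / b) ^ 2
      else if i.val = d - 1 then (x i - Real.sin (b * coord x 0) / b) ^ 2
      else if 1 ≤ i.val then x i ^ 2 else 0) ≤ 1 / b ^ 2}

/-- The lateral disk `φ({s} × B̄(ξ_b(s), 1/b))`. -/
def sideDisk (d : ℕ) (p : ℝ → ℝ) (a b s : ℝ) : Set (E d) :=
  {z | ∃ x : E d, z = φmap d x ∧ coord x 0 = s ∧
    (∑ i : Fin d, if 1 ≤ i.val then (x i - ξfull d p a b s i) ^ 2 else 0) ≤ 1 / b ^ 2}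

/-- Properties of the bump function `𝔭`. -/
def PProps (p : ℝ → ℝ) (a b : ℝ) : Prop :=
  ContDiff ℝ (⊤ : ℕ∞) p ∧ (∀ t, p t ∈ Icc (0 : ℝ) 1) ∧
  (∀ t ∈ Icc (-a + 1 / b ^ 2) (a - 1 / b ^ 2), p t = 1) ∧
  (∀ t, t ∉ Ioo (-a + 1 / b ^ 3) (a - 1 / b ^ 3) → p t = 0)

/-- Admissible control `u` with values in `W` on `[t0,t1]`, with integral curve `γ` from `p`. -/
def Ctrl (d : ℕ) (f : E d → ℝ × ℝ → E d) (W : Set (ℝ × ℝ)) (t0 t1 : ℝ) (p : E d)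
    (u : ℝ → ℝ × ℝ) (γ : ℝ → E d) : Prop :=
  Measurable u ∧ (∀ t ∈ Icc t0 t1, u t ∈ W) ∧
  IntervalIntegrable (fun s => f (γ s) (u s)) volume t0 t1 ∧
  ∀ t ∈ Icc t0 t1, γ t = p + ∫ s in t0..t, f (γ s) (u s)

/-- Young measure `(ν_t)` on `W` over `[t0,t1]`, with integral curve `γ` from `p`. -/
def Young (d : ℕ) (f : E d → ℝ × ℝ → E d) (W : Set (ℝ × ℝ)) (t0 t1 : ℝ) (p : E d)
    (ν : ℝ → Measure (ℝ × ℝ)) (γ : ℝ → E d) : Prop :=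
  (∀ t, IsProbabilityMeasure (ν t)) ∧
  (∀ t ∈ Icc t0 t1, ν t Wᶜ = 0) ∧
  (∀ A : Set (ℝ × ℝ), MeasurableSet A → Measurable fun t => ν t A) ∧
  (∀ᵐ t ∂volume.restrict (Icc t0 t1), Integrable (fun w : ℝ × ℝ => ‖w‖) (ν t)) ∧
  IntervalIntegrable (fun s => ∫ w, f (γ s) w ∂ν s) volume t0 t1 ∧
  ∀ t ∈ Icc t0 t1, γ t = p + ∫ s in t0..t, ∫ w, f (γ s) w ∂ν s

/-- `M_c(ℒ,W)`: infimum of the cost over admissible controls, state constraint `S`,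
initial point `p` at time `t0`, endpoint `q` at time `t1`; value in `ℝ∪{±∞}`, `+∞` if infeasible. -/
def Mc (d : ℕ) (W : Set (ℝ × ℝ)) (ℒ : E d → ℝ × ℝ → ℝ) (t0 t1 : ℝ) (p q : E d)
    (S : Set (E d)) : EReal :=
  sInf {c : EReal | ∃ u γ, Ctrl d (fvf d) W t0 t1 p u γ ∧ (∀ t ∈ Icc t0 t1, γ t ∈ S) ∧
    γ t1 = q ∧ IntervalIntegrable (fun t => ℒ (γ t) (u t)) volume t0 t1 ∧
    c = ((∫ t in t0..t1, ℒ (γ t) (u t) : ℝ) : EReal)}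

/-- `M̊_c(ℒ,W)`: as `Mc`, over controls whose curve moreover satisfies `r(γ(t)) ≠ 0` a.e. -/
def McRing (d : ℕ) (W : Set (ℝ × ℝ)) (ℒ : E d → ℝ × ℝ → ℝ) (t0 t1 : ℝ) (p q : E d)
    (S : Set (E d)) : EReal :=
  sInf {c : EReal | ∃ u γ, Ctrl d (fvf d) W t0 t1 p u γ ∧ (∀ t ∈ Icc t0 t1, γ t ∈ S) ∧
    γ t1 = q ∧ (∀ᵐ t ∂volume.restrict (Icc t0 t1), rfun d (γ t) ≠ 0) ∧
    IntervalIntegrable (fun t => ℒ (γ t) (u t)) volume t0 t1 ∧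
    c = ((∫ t in t0..t1, ℒ (γ t) (u t) : ℝ) : EReal)}

/-- `M_y(ℒ,W)`: infimum of the relaxed cost over Young measures. -/
def My (d : ℕ) (W : Set (ℝ × ℝ)) (ℒ : E d → ℝ × ℝ → ℝ) (t0 t1 : ℝ) (p q : E d)
    (S : Set (E d)) : EReal :=
  sInf {c : EReal | ∃ ν γ, Young d (fvf d) W t0 t1 p ν γ ∧ (∀ t ∈ Icc t0 t1, γ t ∈ S) ∧
    γ t1 = q ∧ (∀ᵐ t ∂volume.restrict (Icc t0 t1), Integrable (fun w => ℒ (γ t) w) (ν t)) ∧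
    IntervalIntegrable (fun t => ∫ w, ℒ (γ t) w ∂ν t) volume t0 t1 ∧
    c = ((∫ t in t0..t1, ∫ w, ℒ (γ t) w ∂ν t : ℝ) : EReal)}

/-- Sub-Riemannian length of a control on `[t0,t1]`. -/
def srLen (u : ℝ → ℝ × ℝ) (t0 t1 : ℝ) : ℝ := ∫ t in t0..t1, Real.sqrt ((u t).1 ^ 2 + (u t).2 ^ 2)

/-- `W`-horizontal curve on `[t0,t1]` (with integrable control norm). -/
def Horiz (d : ℕ) (W : Set (ℝ × ℝ)) (t0 t1 : ℝ) (u : ℝ → ℝ × ℝ) (γ : ℝ → E d) : Prop :=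
  Measurable u ∧ (∀ t ∈ Icc t0 t1, u t ∈ W) ∧
  IntervalIntegrable (fun s => fvf d (γ s) (u s)) volume t0 t1 ∧
  IntervalIntegrable (fun t => Real.sqrt ((u t).1 ^ 2 + (u t).2 ^ 2)) volume t0 t1 ∧
  ∀ t ∈ Icc t0 t1, γ t = γ t0 + ∫ s in t0..t, fvf d (γ s) (u s)

/-- `p` and `q` can be joined by a `W`-horizontal curve of sub-Riemannian length at most `len`
whose image lies in `S`. -/
def HorizJoin (d : ℕ) (W : Set (ℝ × ℝ)) (p q : E d) (len : ℝ) (S : Set (E d)) : Prop :=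
  ∃ (T : ℝ) (u : ℝ → ℝ × ℝ) (γ : ℝ → E d), 0 ≤ T ∧ Horiz d W 0 T u γ ∧
    γ 0 = p ∧ γ T = q ∧ srLen u 0 T ≤ len ∧ ∀ t ∈ Icc 0 T, γ t ∈ S

/-- Closed sub-Riemannian ball: endpoints of `ℝ²`-horizontal curves from `p` of length `≤ ρ`. -/
def BSR (d : ℕ) (p : E d) (ρ : ℝ) : Set (E d) :=
  {z | ∃ (T : ℝ) (u : ℝ → ℝ × ℝ) (γ : ℝ → E d), 0 ≤ T ∧ Horiz d univ 0 T u γ ∧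
    γ 0 = p ∧ γ T = z ∧ srLen u 0 T ≤ ρ}

/-- The weighted box `Q(c,ρ)` with weights `(1,1,2,3,…,d-1)`. -/
def Qbox (d : ℕ) (c ρ : ℝ) : Set (E d) := {v | ∀ i : Fin d, |v i| ≤ c * ρ ^ max 1 i.val}

/-- The winding vector field `Θ(v) = (-v₂,v₁)/(v₁²+v₂²)`. -/
def Θfun (v : ℝ × ℝ) : ℝ × ℝ := (-v.2 / (v.1 ^ 2 + v.2 ^ 2), v.1 / (v.1 ^ 2 + v.2 ^ 2))

/-- `γ̊(t) = τ(φ⁻¹(γ(t)) + (0,ξ_b(γ₁(t)))) ∈ ℝ²`, `τ` projecting to the last two coordinates. -/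
def ringc (d : ℕ) (p : ℝ → ℝ) (a b : ℝ) (γ : ℝ → E d) (t : ℝ) : ℝ × ℝ :=
  (coord (φinv d (γ t) + ξfull d p a b (coord (γ t) 0)) (d - 2),
   coord (φinv d (γ t) + ξfull d p a b (coord (γ t) 0)) (d - 1))

/-- Winding integral `∫ ⟨Θ(g(t)), g'(t)⟩ dt`. -/
def windInt (g : ℝ → ℝ × ℝ) (i0 i1 : ℝ) : ℝ :=
  ∫ t in i0..i1, ((Θfun (g t)).1 * (deriv g t).1 + (Θfun (g t)).2 * (deriv g t).2)

/-- The standing numerical assumptions on `a`, `b`, `δ`, `λ`. -/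
def Params (a b δ lam : ℝ) : Prop :=
  0 < a ∧ a < 1 ∧ 1 < b ∧ 2 * π < a * b ∧ 0 < δ ∧ 1 < lam ∧ lam < 2 ∧ (lam - 1) * a < δ

/-- Standing assumptions on `Γ`: open, bounded, inside `(ℝ∖[-a,a])×ℝ^{d-1}`, and,
with `Ω = 𝕊 ∪ Γ`: `Ω` contains `x₀` and `x₁` and `closure Ω` contains `η([-a_δ,a_δ])`. -/
def ΓBasic (d : ℕ) (a b δ lam : ℝ) (Γ : Set (E d)) : Prop :=
  IsOpen Γ ∧ Bornology.IsBounded Γ ∧ (Γ ⊆ {x : E d | coord x 0 ∉ Icc (-a) a}) ∧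
  ηc d (-(lam * a)) ∈ Sspiral d a b ∪ Γ ∧ ηc d (lam * a) ∈ Sspiral d a b ∪ Γ ∧
  (fun t => ηc d t) '' Icc (-(a + δ)) (a + δ) ⊆ closure (Sspiral d a b ∪ Γ)

/-- Joinability of the lateral disks to `x₀` resp. `x₁` through `Γ` by `U_::`-horizontal curves
of length at most `δ/2`. -/
def JoinHyp (d : ℕ) (p : ℝ → ℝ) (a b δ lam : ℝ) (Γ : Set (E d)) : Prop :=
  (∀ q ∈ sideDisk d p a b (-a), HorizJoin d Ucorners (ηc d (-(lam * a))) q (δ / 2) (Γ ∪ {q})) ∧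
  (∀ q ∈ sideDisk d p a b a, HorizJoin d Ucorners q (ηc d (lam * a)) (δ / 2) (Γ ∪ {q}))

/-- Reachability: some admissible control with values in `W` joins `x₀` to `x₁` within `closure Ω`. -/
def ReachHyp (d : ℕ) (W : Set (ℝ × ℝ)) (a b δ lam : ℝ) (Γ : Set (E d)) : Prop :=
  ∃ u γ, Ctrl d (fvf d) W (-(a + δ)) (a + δ) (ηc d (-(lam * a))) u γ ∧
    (∀ t ∈ Icc (-(a + δ)) (a + δ), γ t ∈ closure (Sspiral d a b ∪ Γ)) ∧
    γ (a + δ) = ηc d (lam * a)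

/-- Uniform ball-box estimates with constants `c̄`, `C̄`, `δ₀` on the compact set `K`. -/
def BallBoxHyp (d : ℕ) (cbar Cbar δ0 : ℝ) (K : Set (E d)) : Prop :=
  0 < cbar ∧ 0 < Cbar ∧ 0 < δ0 ∧ IsCompact K ∧
  ∀ y : E d, φmap d y ∈ K → ∀ ρ : ℝ, 0 < ρ → ρ ≤ δ0 →
    (fun v => φmap d (y + v)) '' Qbox d cbar ρ ⊆ BSR d (φmap d y) ρ ∧
    BSR d (φmap d y) ρ ⊆ (fun v => φmap d (y + v)) '' Qbox d Cbar ρ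


lemma indIcc_integrable (A B : ℝ) :
    Integrable (fun s => if s ∈ Icc A B then (1:ℝ) else 0) volume := by
  have : (fun s => if s ∈ Icc A B then (1:ℝ) else 0)
      = Set.indicator (Icc A B) (fun _ => (1:ℝ)) := by
    funext s; simp [Set.indicator_apply]
  rw [this, integrable_indicator_iff measurableSet_Icc]
  exact integrableOn_const measure_Icc_lt_top.ne

lemma integral_indIcc (A B t0 t : ℝ) (h0 : t0 ≤ A) (hAB : A ≤ B) (ht : t0 ≤ t) :
    (∫ s in t0..t, (if s ∈ Icc A B then (1:ℝ) else 0)) = max A (min B t) - A := by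
  set g : ℝ → ℝ := fun s => if s ∈ Icc A B then (1:ℝ) else 0 with hg
  have hint : ∀ x y : ℝ, IntervalIntegrable g volume x y :=
    fun x y => (indIcc_integrable A B).intervalIntegrable
  have hAe : ∀ᵐ s : ℝ ∂volume, s ≠ A := by
    rw [MeasureTheory.ae_iff]; simpa using measure_singleton A
  have hBe : ∀ᵐ s : ℝ ∂volume, s ≠ B := by
    rw [MeasureTheory.ae_iff]; simpa using measure_singleton B
  -- zero integral below A
  have hzero : ∀ x y : ℝ, x ≤ A → y ≤ A → (∫ s in x..y, g s) = 0 := by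
    intro x y hx hy
    have : (∫ s in x..y, g s) = ∫ s in x..y, (0:ℝ) := by
      apply intervalIntegral.integral_congr_ae
      filter_upwards [hAe] with s hs hmem
      have hm : s ∈ Set.Ioc (min x y) (max x y) := by
        simpa [Set.uIoc] using hmem
      have hsA : s < A := lt_of_le_of_ne (le_trans hm.2 (max_le hx hy)) hs
      simp [hg, Set.mem_Icc, not_le.2 hsA]
    simpa using this
  -- zero integral above B
  have hzero' : ∀ x y : ℝ, B ≤ x → B ≤ y → (∫ s in x..y, g s) = 0 := by
    intro x y hx hy
    have : (∫ s in x..y, g s) = ∫ s in x..y, (0:ℝ) := by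
      apply intervalIntegral.integral_congr_ae
      filter_upwards [hBe] with s hs hmem
      have hm : s ∈ Set.Ioc (min x y) (max x y) := by
        simpa [Set.uIoc] using hmem
      have hsB : B < s := lt_of_le_of_ne (le_trans (le_min hx hy) hm.1.le) (Ne.symm hs)
      simp [hg, Set.mem_Icc, not_le.2 hsB]
    simpa using this
  -- full value on [A, y] for A ≤ y ≤ B
  have hone : ∀ y : ℝ, A ≤ y → y ≤ B → (∫ s in A..y, g s) = y - A := by
    intro y hy hyB
    have : (∫ s in A..y, g s) = ∫ s in A..y, (1:ℝ) := by
      apply intervalIntegral.integral_congr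
      intro s hs
      rw [Set.uIcc_of_le hy] at hs
      simp [hg, Set.mem_Icc, hs.1, le_trans hs.2 hyB]
    rw [this]; simp
  rcases le_total t A with htA | hAt
  · rw [hzero t0 t h0 htA]
    rw [min_eq_right (le_trans htA hAB), max_eq_left htA]
    ring
  · rcases le_total t B with htB | hBt
    · have h1 := intervalIntegral.integral_add_adjacent_intervals (hint t0 A) (hint A t)
      rw [hzero t0 A h0 le_rfl, hone t hAt htB, zero_add] at h1
      rw [← h1, min_eq_right htB, max_eq_right hAt]
    · have h1 := intervalIntegral.integral_add_adjacent_intervals (hint t0 A) (hint A B)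
      rw [hzero t0 A h0 le_rfl, hone B hAB le_rfl, zero_add] at h1
      have h2 := intervalIntegral.integral_add_adjacent_intervals (hint t0 B) (hint B t)
      rw [← h1, hzero' B t le_rfl hBt, add_zero] at h2
      rw [← h2, min_eq_left hBt, max_eq_right hAB]



lemma rfun_ηc (d : ℕ) (hd : 0 < d) (s : ℝ) : rfun d (ηc d s) = 0 := by
  have hφ : ∀ i : Fin d, 2 ≤ i.val → φinv d (ηc d s) i = 0 := by
    intro i hi
    have h0 : φinv d (ηc d s) i = ∑ j, Amat d (-(coord (ηc d s) 0)) i j * (ηc d s) j := rfl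
    rw [h0]
    apply Finset.sum_eq_zero
    intro j _
    by_cases hj : j.val = 0
    · have : (ηc d s) j = s := by simp [ηc, mk, hj]
      rw [this]
      simp [Amat, hj, show ¬ i.val = 0 by omega]
    · have : (ηc d s) j = 0 := by simp [ηc, mk, hj]
      rw [this, mul_zero]
  have : (∑ i : Fin d, if 2 ≤ i.val then (φinv d (ηc d s)) i ^ 2 else 0) = 0 := by
    apply Finset.sum_eq_zero
    intro i _
    by_cases hi : 2 ≤ i.val
    · simp [hi, hφ i hi]
    · simp [hi]
  rw [rfun, this, Real.sqrt_zero]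

lemma coord_ηc (d : ℕ) (hd : 0 < d) (s : ℝ) : coord (ηc d s) 0 = s := by
  simp [coord, hd, ηc, mk]

lemma ηc_add_smul (d : ℕ) (s r : ℝ) :
    ηc d s + r • (mk d fun i => if i.val = 0 then (1:ℝ) else 0) = ηc d (s + r) := by
  ext i
  show (if i.val = 0 then s else 0) + r * (if i.val = 0 then (1:ℝ) else 0)
      = (if i.val = 0 then s + r else 0)
  split <;> ring


/-- Lemma: `M_c(L^∨,U_□) ≤ 2a`. -/
theorem statement7 (d : ℕ) (hd : 4 ≤ d) (a b δ lam : ℝ) (hP : Params a b δ lam)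
    (p : ℝ → ℝ) (hp : PProps p a b) (Γ : Set (E d)) (hΓ : ΓBasic d a b δ lam Γ)
    (hJ : JoinHyp d p a b δ lam Γ) :
    (∃ u γ, Ctrl d (fvf d) Usq (-(a + δ)) (a + δ) (ηc d (-(lam * a))) u γ ∧
      (∀ t ∈ Icc (-(a + δ)) (a + δ), γ t ∈ closure (Sspiral d a b ∪ Γ)) ∧
      γ (a + δ) = ηc d (lam * a) ∧
      (∀ t ∈ Icc (-(lam * a)) (lam * a), u t = (1, 0)) ∧
      (∀ t ∈ Icc (-(a + δ)) (a + δ), t ∉ Icc (-(lam * a)) (lam * a) → u t = (0, 0)) ∧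
      (∫ t in (-(a + δ))..(a + δ), Lvee d a (γ t) (u t)) = 2 * a) ∧
    Mc d Usq (Lvee d a) (-(a + δ)) (a + δ) (ηc d (-(lam * a))) (ηc d (lam * a))
        (closure (Sspiral d a b ∪ Γ)) ≤ ((2 * a : ℝ) : EReal) := by

  obtain ⟨ha0, ha1, hb1, hab, hδ, hlam1, hlam2, hlamδ⟩ := hP
  have hd0 : 0 < d := by omega
  set B : ℝ := lam * a with hBdef
  have hB0 : 0 < B := by nlinarith
  have haB : a < B := by nlinarith
  have hABle : -B ≤ B := by linarith
  have ht0A : -(a + δ) ≤ -B := by nlinarith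
  have hBt1 : B ≤ a + δ := by nlinarith
  have ht0a : -(a + δ) ≤ -a := by linarith
  have hat1 : a ≤ a + δ := by linarith
  set c : E d := mk d fun i => if i.val = 0 then (1:ℝ) else 0 with hc
  set u : ℝ → ℝ × ℝ := fun t => if t ∈ Icc (-B) B then ((1:ℝ), (0:ℝ)) else (0, 0) with hu
  set γ : ℝ → E d := fun t => ηc d (max (-B) (min B t)) with hγ
  have hfun : (fun s => fvf d (γ s) (u s))
      = fun s => (if s ∈ Icc (-B) B then (1:ℝ) else 0) • c := by
    funext s
    by_cases hs : -B ≤ s ∧ s ≤ B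
    · simp [hu, Set.mem_Icc, hs, fvf, f₁, hc]
    · simp [hu, Set.mem_Icc, hs, fvf]
  have hII : ∀ x y : ℝ, IntervalIntegrable (fun s => fvf d (γ s) (u s)) volume x y := by
    intro x y
    rw [hfun]
    exact ((indIcc_integrable (-B) B).smul_const c).intervalIntegrable
  have hγformula : ∀ t, -(a + δ) ≤ t →
      γ t = ηc d (-B) + ∫ s in (-(a + δ))..t, fvf d (γ s) (u s) := by
    intro t ht
    rw [hfun, intervalIntegral.integral_smul_const,
      integral_indIcc (-B) B _ t ht0A hABle ht, ηc_add_smul]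
    show ηc d (max (-B) (min B t)) = ηc d (-B + (max (-B) (min B t) - -B))
    congr 1
    ring
  have hLv : ∀ t : ℝ, Lvee d a (γ t) (u t) = if t ∈ Icc (-a) a then 1 else 0 := by
    intro t
    have hγt : γ t = ηc d (max (-B) (min B t)) := rfl
    rw [Lvee, hγt, coord_ηc d hd0, rfun_ηc d hd0]
    by_cases hmem : t ∈ Icc (-a) a
    · have hsB : t ∈ Icc (-B) B := ⟨le_trans (neg_le_neg haB.le) hmem.1, le_trans hmem.2 haB.le⟩
      have hst : max (-B) (min B t) = t := by
        rw [min_eq_right hsB.2, max_eq_right hsB.1]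
      rw [hst, χ, if_pos hmem]
      have hut : u t = ((1:ℝ), (0:ℝ)) := if_pos hsB
      rw [hut]
      norm_num [supNorm]
    · have hout : max (-B) (min B t) ∉ Icc (-a) a := by
        rw [Set.mem_Icc] at hmem
        push_neg at hmem
        rcases le_or_gt (-a) t with h1 | h1
        · have hta : a < t := hmem h1
          have : a < max (-B) (min B t) :=
            lt_of_lt_of_le (lt_min haB hta) (le_max_right _ _)
          exact fun hs => absurd hs.2 (not_le.2 this)
        · have htB : t ≤ B := le_trans h1.le (by linarith)
          have : max (-B) (min B t) < -a := by
            rw [min_eq_right htB]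
            exact max_lt (by linarith) h1
          exact fun hs => absurd hs.1 (not_le.2 this)
      rw [χ, if_neg hout, if_neg hmem, zero_mul]
  have hcostfun : (fun t => Lvee d a (γ t) (u t))
      = fun t => if t ∈ Icc (-a) a then (1:ℝ) else 0 := funext hLv
  have hcost : (∫ t in (-(a + δ))..(a + δ), Lvee d a (γ t) (u t)) = 2 * a := by
    rw [hcostfun, integral_indIcc (-a) a _ _ ht0a (by linarith) (by linarith),
      min_eq_left hat1, max_eq_right (by linarith : -a ≤ a)]
    ring
  have hcostII : IntervalIntegrable (fun t => Lvee d a (γ t) (u t)) volume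
      (-(a + δ)) (a + δ) := by
    rw [hcostfun]
    exact (indIcc_integrable _ _).intervalIntegrable
  have hCtrl : Ctrl d (fvf d) Usq (-(a + δ)) (a + δ) (ηc d (-B)) u γ := by
    refine ⟨?_, ?_, hII _ _, ?_⟩
    · exact Measurable.ite measurableSet_Icc measurable_const measurable_const
    · intro t _
      by_cases hs : t ∈ Icc (-B) B
      · have h : u t = ((1:ℝ), (0:ℝ)) := if_pos hs
        rw [h]; norm_num [Usq, Set.mem_prod, Set.mem_Icc, Prod.le_def]
      · have h : u t = ((0:ℝ), (0:ℝ)) := if_neg hs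
        rw [h]; norm_num [Usq, Set.mem_prod, Set.mem_Icc, Prod.le_def]
    · intro t ht
      exact hγformula t ht.1
  have hstate : ∀ t ∈ Icc (-(a + δ)) (a + δ), γ t ∈ closure (Sspiral d a b ∪ Γ) := by
    intro t _
    apply hΓ.2.2.2.2.2
    refine ⟨max (-B) (min B t), ⟨?_, ?_⟩, rfl⟩
    · exact le_trans ht0A (le_max_left _ _)
    · exact le_trans (max_le hABle (min_le_left _ _)) hBt1
  have hend : γ (a + δ) = ηc d B := by
    show ηc d (max (-B) (min B (a + δ))) = ηc d B
    rw [min_eq_left hBt1, max_eq_right hABle]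
  refine ⟨⟨u, γ, hCtrl, hstate, hend, ?_, ?_, hcost⟩, ?_⟩
  · intro t ht
    exact if_pos ht
  · intro t _ ht
    exact if_neg ht
  · apply sInf_le
    exact ⟨u, γ, hCtrl, hstate, hend, hcostII, by rw [hcost]⟩

end SRGap
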